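/- Every word in 𝒜 = ∪_{k≥0} μ^k({00, 11, 010010, 101101}) is a factor of the Thue–Morse word t = μ^∞(0). -/

import Mathlib

def mu (w : List Bool) : List Bool := w.flatMap (fun b => if b then [true, false] else [false, true])

def isPow (beta : ℚ) (w : List Bool) : Prop :=
  ∃ (n : ℕ) (x x' : List Bool), x ≠ [] ∧ x' <+: x ∧
    w = (List.replicate n x).flatten ++ x' ∧ beta = n + (x'.length : ℚ) / (x.length : ℚ)

def PowFree (a : ℚ) (w : List Bool) : Prop :=
  ∀ v, v <:+: w → ∀ beta : ℚ, a ≤ beta → ¬ isPow beta v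

def OverlapFree (w : List Bool) : Prop :=
  ∀ u v : List Bool, u ≠ [] → ¬ (u ++ v ++ u ++ v ++ u) <:+: w

def seg (w : ℕ → Bool) (i n : ℕ) : List Bool := (List.range n).map (fun j => w (i + j))

def FactorOf (v : List Bool) (w : ℕ → Bool) : Prop := ∃ i, v = seg w i v.length

def PowFreeInf (a : ℚ) (w : ℕ → Bool) : Prop :=
  ∀ v, FactorOf v w → ∀ beta : ℚ, a ≤ beta → ¬ isPow beta v

def OverlapFreeInf (w : ℕ → Bool) : Prop :=
  ∀ u v : List Bool, u ≠ [] → ¬ FactorOf (u ++ v ++ u ++ v ++ u) w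

def SqLenAt (w : ℕ → Bool) (i m : ℕ) : Prop := ∀ j < m, w (i + j) = w (i + m + j)

def SqAt (w : ℕ → Bool) (i : ℕ) : Prop := ∃ m, 0 < m ∧ SqLenAt w i m

def SetA : Set (List Bool) :=
  {[false, false], [true, true],
   [false, true, false, false, true, false], [true, false, true, true, false, true]}

def InA (w : List Bool) : Prop := ∃ (k : ℕ) (s : List Bool), s ∈ SetA ∧ w = mu^[k] s

def ConjInA (w : List Bool) : Prop :=
  ∃ (k : ℕ) (s u v : List Bool), s ∈ SetA ∧ mu^[k] s = u ++ v ∧ w = v ++ u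

lemma mu_append (a b : List Bool) : mu (a ++ b) = mu a ++ mu b := by
  simp [mu]

lemma mu_infix {a b : List Bool} (h : a <:+: b) : mu a <:+: mu b := by
  obtain ⟨u, v, rfl⟩ := h
  exact ⟨mu u, mu v, by simp [mu_append]⟩

lemma muk_infix (k : ℕ) {a b : List Bool} (h : a <:+: b) :
    mu^[k] a <:+: mu^[k] b := by
  induction k with
  | zero => simpa using h
  | succ n ih =>
    rw [Function.iterate_succ_apply', Function.iterate_succ_apply']
    exact mu_infix ih

lemma infix_prefix_factor (t : ℕ → Bool)
    (ht : ∀ k : ℕ, seg t 0 (mu^[k] [false]).length = mu^[k] [false])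
    {v : List Bool} {n : ℕ} (h : v <:+: mu^[n] [false]) : FactorOf v t := by
  obtain ⟨a, b, hab⟩ := h
  have ht' : seg t 0 (a ++ v ++ b).length = a ++ v ++ b := by rw [hab]; exact ht n
  refine ⟨a.length, ?_⟩
  apply List.ext_getElem
  · simp [seg]
  · intro j hj hj'
    have hjv : j < v.length := hj
    have hidx : a.length + j < (a ++ v ++ b).length := by simp; omega
    have hidx2 : a.length + j < (seg t 0 (a ++ v ++ b).length).length := by
      simp [seg] at hidx ⊢; omega
    have h1 : (a ++ v ++ b)[a.length + j]'hidx = t (a.length + j) := by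
      rw [← List.getElem_of_eq ht' hidx2]
      simp [seg]
    have h2 : (a ++ v ++ b)[a.length + j]'hidx = v[j] := by
      rw [List.getElem_append_left (by simp; omega)]
      rw [List.getElem_append_right (by omega)]
      congr 1
      omega
    have h3 : (seg t a.length v.length)[j]'(by simpa [seg] using hjv) = t (a.length + j) := by
      simp [seg]
    rw [h3, ← h1, h2]

theorem stmt13 (t : ℕ → Bool)
    (ht : ∀ k : ℕ, seg t 0 (mu^[k] [false]).length = mu^[k] [false]) :
    ∀ w, InA w → FactorOf w t := by
  rintro w ⟨k, s, hs, rfl⟩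
  have hbase : s <:+: mu^[5] [false] := by
    rcases hs with h | h | h | h <;> subst h <;> decide
  have h := muk_infix k hbase
  rw [← Function.iterate_add_apply] at h
  exact infix_prefix_factor t ht h
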